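/- Let p be an odd prime, m a positive integer, G = Gal(ℚ(ζ_{p^m})/ℚ), acting on the group μ_{2p^m} of 2p^m-th roots of unity. Then the Tate cohomology group Ĥ⁰(G, μ_{2p^m}) = (μ_{2p^m})^G / N_G(μ_{2p^m}) has order 2, where N_G(x) = ∏_{σ∈G} σ(x). -/

import Mathlib

open Polynomial

/-- The Tate cohomology group `Ĥ⁰(G, μ_{2p^m}) = (μ_{2p^m})^G / N_G(μ_{2p^m})` has order 2,
where `G = Gal(ℚ(ζ_{p^m})/ℚ)` acts on the `2p^m`-th roots of unity. -/
theorem stmt_2 (p m : ℕ) (hp : p.Prime) (hodd : Odd p) (hm : 1 ≤ m)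
    (K : Type) [Field K] [CharZero K]
    [IsCyclotomicExtension {p ^ m} ℚ K]
    [Fintype (K ≃ₐ[ℚ] K)]
    (Fix : Subgroup Kˣ)
    (hFix : ∀ x, x ∈ Fix ↔ x ∈ rootsOfUnity (2 * p ^ m) K ∧
      ∀ σ : K ≃ₐ[ℚ] K, Units.map (σ : K →* K) x = x)
    (Nrm : Subgroup Kˣ)
    (hNrm : ∀ y, y ∈ Nrm ↔ ∃ x ∈ rootsOfUnity (2 * p ^ m) K,
      y = ∏ σ : K ≃ₐ[ℚ] K, Units.map (σ : K →* K) x) :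
    Nat.card (Fix ⧸ Nrm.subgroupOf Fix) = 2 := by
  classical
  set n : ℕ+ := ⟨p ^ m, pow_pos hp.pos m⟩ with hn
  have hp2 : p ≠ 2 := by rintro rfl; simp [Nat.odd_iff] at hodd
  have hp3 : 3 ≤ p := by have := hp.two_le; omega
  have hn3 : 2 < p ^ m := lt_of_lt_of_le (by omega) (Nat.le_self_pow (by omega) p)
  have hpm_pos : 0 < p ^ m := pow_pos hp.pos m
  haveI : NeZero (p ^ m) := ⟨hpm_pos.ne'⟩
  haveI : NeZero (2 * p ^ m) := ⟨by positivity⟩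
  have hoddpm : Odd (p ^ m) := hodd.pow
  have hcop2 : Nat.Coprime 2 (p ^ m) := by
    refine (Nat.prime_two.coprime_iff_not_dvd).mpr ?_
    have := Nat.odd_iff.mp hoddpm
    omega
  set ζ : K := IsCyclotomicExtension.zeta (p ^ m) ℚ K with hζdef
  have hζ : IsPrimitiveRoot ζ (p ^ m) := IsCyclotomicExtension.zeta_spec (p ^ m) ℚ K
  have irr : Irreducible (cyclotomic (n : ℕ) ℚ) := cyclotomic.irreducible_rat n.pos
  let e : (K ≃ₐ[ℚ] K) ≃* (ZMod (p ^ m))ˣ := IsCyclotomicExtension.autEquivPow (n := p ^ m) K irr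
  set σc : K ≃ₐ[ℚ] K := e.symm (-1) with hσcdef
  have hζ' : IsPrimitiveRoot ζ (p ^ m) := IsCyclotomicExtension.zeta_spec (p ^ m) ℚ K
  have he' : hζ'.autToPow ℚ σc = (-1 : (ZMod (p ^ m))ˣ) := by
    have h0 := e.apply_symm_apply (-1)
    rw [← h0]
    simp only [e, IsCyclotomicExtension.autEquivPow_apply]
    rfl
  -- σc sends ζ to ζ⁻¹
  have hσcζ : σc ζ = ζ⁻¹ := by
    have hspec := hζ'.autToPow_spec ℚ σc
    rw [he'] at hspec
    refine eq_inv_of_mul_eq_one_left ?_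
    rw [← hspec, ← pow_succ]
    refine (hζ.pow_eq_one_iff_dvd _).mpr ?_
    have hz : ((((-1 : (ZMod (p ^ m))ˣ) : ZMod (p ^ m)).val + 1 : ℕ) : ZMod (p ^ m)) = 0 := by
      push_cast [ZMod.natCast_val, ZMod.cast_id]
      ring
    exact (ZMod.natCast_eq_zero_iff _ _).mp hz
  -- -ζ is a primitive (2 * p ^ m)-th root of unity
  have hord2K : orderOf (-1 : K) = 2 := by
    rw [orderOf_neg_one, if_neg]
    rw [ringChar.eq_zero]
    norm_num
  have hordζ : orderOf ζ = p ^ m := hζ.eq_orderOf.symm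
  have hordξ : orderOf ((-1 : K) * ζ) = 2 * p ^ m := by
    rw [Commute.orderOf_mul_eq_mul_orderOf_of_coprime (Commute.all _ _)
      (by rw [hord2K, hordζ]; exact hcop2), hord2K, hordζ]
  have hξ : IsPrimitiveRoot ((-1 : K) * ζ) (2 * p ^ m) := by
    have := IsPrimitiveRoot.orderOf ((-1 : K) * ζ)
    rwa [hordξ] at this
  -- σc inverts all (2p^m)-th roots of unity
  have hσcξ : ∀ i : ℕ, σc (((-1 : K) * ζ) ^ i) = ((((-1 : K) * ζ)) ^ i)⁻¹ := by
    intro i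
    rw [map_pow, ← inv_pow]
    congr 1
    rw [map_mul, map_neg, map_one, hσcζ, mul_inv, inv_neg_one]
  have key : ∀ x : Kˣ, x ∈ rootsOfUnity (2 * p ^ m) K →
      Units.map (σc : K →* K) x = x⁻¹ := by
    intro x hx
    have hx' : (x : K) ^ (2 * p ^ m) = 1 := by
      rw [mem_rootsOfUnity] at hx
      simpa using congrArg Units.val hx
    obtain ⟨i, -, hi⟩ := hξ.eq_pow_of_pow_eq_one hx'
    ext
    rw [Units.coe_map, Units.val_inv_eq_inv_val]
    simpa [← hi] using hσcξ i
  -- dichotomy: units squaring to 1 are ±1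
  have dichot : ∀ y : Kˣ, y * y = 1 → y = 1 ∨ y = -1 := by
    intro y hy
    have h3 : (y : K) * (y : K) = 1 := by simpa using congrArg Units.val hy
    rcases mul_self_eq_one_iff.mp h3 with h | h
    · exact Or.inl (Units.ext (by simpa using h))
    · exact Or.inr (Units.ext (by simpa using h))
  -- the Galois group has even order
  have hcard : Even (Fintype.card (K ≃ₐ[ℚ] K)) := by
    have h1 : Fintype.card (K ≃ₐ[ℚ] K) = Fintype.card (ZMod (p ^ m))ˣ :=
      Fintype.card_congr e.toEquiv
    rw [h1, ZMod.card_units_eq_totient]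
    exact Nat.totient_even hn3
  -- the norm of every (2p^m)-th root of unity is 1
  have hnorm : ∀ x : Kˣ, x ∈ rootsOfUnity (2 * p ^ m) K →
      (∏ σ : K ≃ₐ[ℚ] K, Units.map (σ : K →* K) x) = 1 := by
    intro x hx
    set N := ∏ σ : K ≃ₐ[ℚ] K, Units.map (σ : K →* K) x with hNdef
    have hmulapp : ∀ σ : K ≃ₐ[ℚ] K, Units.map ((σ * σc : K ≃ₐ[ℚ] K) : K →* K) x
        = (Units.map (σ : K →* K) x)⁻¹ := by
      intro σ
      have h1 : Units.map ((σ * σc : K ≃ₐ[ℚ] K) : K →* K) x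
          = Units.map (σ : K →* K) (Units.map (σc : K →* K) x) := by
        ext; simp
      rw [h1, key x hx, map_inv]
    have hNinv : N = N⁻¹ := by
      calc N = ∏ σ : K ≃ₐ[ℚ] K, Units.map ((σ * σc : K ≃ₐ[ℚ] K) : K →* K) x :=
            (Fintype.prod_equiv (Equiv.mulRight σc)
              (fun σ => Units.map ((σ * σc : K ≃ₐ[ℚ] K) : K →* K) x)
              (fun σ => Units.map (σ : K →* K) x) (fun σ => rfl)).symm
        _ = ∏ σ : K ≃ₐ[ℚ] K, (Units.map (σ : K →* K) x)⁻¹ :=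
            Finset.prod_congr rfl (fun σ _ => hmulapp σ)
        _ = N⁻¹ := by rw [← Finset.prod_inv_distrib]
    have hN2 : N ^ 2 = 1 := by
      rw [sq]; nth_rewrite 1 [hNinv]; simp
    have hw : x ^ (p ^ m) = 1 ∨ x ^ (p ^ m) = -1 := by
      refine dichot _ ?_
      rw [← pow_add, ← two_mul]
      exact (mem_rootsOfUnity _ _).mp hx
    have hNp : N ^ (p ^ m) = 1 := by
      have hstep : N ^ (p ^ m) = ∏ σ : K ≃ₐ[ℚ] K, Units.map (σ : K →* K) (x ^ (p ^ m)) := by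
        rw [hNdef, ← Finset.prod_pow]
        exact Finset.prod_congr rfl (fun σ _ => (map_pow _ _ _).symm
          )
      rw [hstep]
      rcases hw with hw | hw
      · simp [hw]
      · rw [hw]
        have hneg : ∀ σ : K ≃ₐ[ℚ] K, Units.map (σ : K →* K) (-1 : Kˣ) = -1 := by
          intro σ; ext; simp
        simp only [hneg, Finset.prod_const, Finset.card_univ]
        exact hcard.neg_one_pow
    have hdvd : orderOf N ∣ Nat.gcd 2 (p ^ m) :=
      Nat.dvd_gcd (orderOf_dvd_of_pow_eq_one hN2) (orderOf_dvd_of_pow_eq_one hNp)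
    rw [hcop2] at hdvd
    exact orderOf_eq_one_iff.mp (Nat.dvd_one.mp hdvd)
  -- Fix = {±1}
  have hFixEq : Fix = Subgroup.zpowers (-1 : Kˣ) := by
    have hmem : ∀ y : Kˣ, y = 1 ∨ y = -1 →
        (y ∈ rootsOfUnity (2 * p ^ m) K ∧ ∀ σ : K ≃ₐ[ℚ] K, Units.map (σ : K →* K) y = y) := by
      rintro y (rfl | rfl)
      · exact ⟨one_mem _, fun σ => map_one _⟩
      · constructor
        · rw [mem_rootsOfUnity, pow_mul, neg_one_sq, one_pow]
        · intro σ; ext; simp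
    ext x
    rw [hFix]
    constructor
    · rintro ⟨hx, hfix⟩
      have h1 : x = x⁻¹ := by rw [← key x hx, hfix σc]
      have h2 : x * x = 1 := by nth_rewrite 2 [h1]; simp
      rcases dichot x h2 with h | h
      · rw [h]; exact one_mem _
      · rw [h]; exact Subgroup.mem_zpowers _
    · intro hx
      obtain ⟨k, rfl⟩ := Subgroup.mem_zpowers_iff.mp hx
      refine hmem _ (dichot _ ?_)
      rw [← zpow_add, ← two_mul, zpow_mul]
      simp [zpow_two]
  -- Nrm = ⊥
  have hNrmEq : Nrm = ⊥ := by
    ext y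
    rw [hNrm, Subgroup.mem_bot]
    constructor
    · rintro ⟨x, hx, rfl⟩
      exact hnorm x hx
    · rintro rfl
      exact ⟨1, one_mem _, by simp⟩
  -- conclude
  have hq : Nat.card (Fix ⧸ Nrm.subgroupOf Fix) = Nat.card Fix := by
    rw [hNrmEq, Subgroup.bot_subgroupOf]
    exact Nat.card_congr (QuotientGroup.quotientBot (G := Fix)).toEquiv
  rw [hq, hFixEq, Nat.card_zpowers]
  calc orderOf (-1 : Kˣ) = orderOf ((-1 : Kˣ) : K) := orderOf_units.symm
    _ = 2 := by rw [Units.val_neg, Units.val_one]; exact hord2K
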